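/- Let K ∈ 𝒦 with associated sequence Λ_j = Σ_{l>j} α_l, where α_l = 2^{-l}(k_{-l} − k_{-l+1}). Then every Haar function is an eigenfunction of the operator Tf(x) = ∫_{ℝ⁺} K(x,y) f(y) dy: for each h ∈ ℋ with supporting interval I(h) ∈ 𝒟^{j(h)}, one has Th(x) = Λ_{j(h)} h(x) for every x ∈ ℝ⁺. -/

import Mathlib

open MeasureTheory Set Filter
open scoped ENNReal

/-- The dyadic distance on ℝ⁺: the infimum of the lengths of the dyadic
intervals `[k·2^{-j}, (k+1)·2^{-j})` containing both points (and `0` on the diagonal). -/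
noncomputable def dyadicDist (x y : ℝ) : ℝ :=
  if x = y then 0
  else sInf {r : ℝ | ∃ (j : ℤ) (k : ℕ), r = (2:ℝ) ^ (-j) ∧
    x ∈ Set.Ico ((k : ℝ) * (2:ℝ) ^ (-j)) (((k : ℝ) + 1) * (2:ℝ) ^ (-j)) ∧
    y ∈ Set.Ico ((k : ℝ) * (2:ℝ) ^ (-j)) (((k : ℝ) + 1) * (2:ℝ) ^ (-j))}

/-- The sequence `α_l = 2^{-l}(k_{-l} - k_{-l+1})` associated to the level values `k` of a
kernel in `𝒦`. -/
noncomputable def alphaOf (k : ℤ → ℝ) (l : ℤ) : ℝ :=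
  (2:ℝ) ^ (-l) * (k (-l) - k (-l + 1))

/-- The profile `φ(s) = Σ_{l∈ℤ} α_l 2^l χ_{(0,2^{-l}]}(s)` associated to the level values `k`. -/
noncomputable def phiOf (k : ℤ → ℝ) (s : ℝ) : ℝ :=
  ∑' l : ℤ, alphaOf k l * ((2:ℝ) ^ l * (if s ∈ Set.Ioc (0:ℝ) ((2:ℝ) ^ (-l)) then 1 else 0))

/-- The sequence `Λ_j = Σ_{l>j} α_l` associated to the level values `k`. -/
noncomputable def LambdaOf (k : ℤ → ℝ) (j : ℤ) : ℝ :=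
  ∑' m : ℕ, alphaOf k (j + 1 + m)

/-- The Haar function `h^j_k(x) = 2^{j/2}(χ_{[0,1/2)} - χ_{[1/2,1)})(2^j x - k)`,
supported in the dyadic interval `I^j_k = [k·2^{-j},(k+1)·2^{-j})`. -/
noncomputable def haarFn (j : ℤ) (k : ℕ) (x : ℝ) : ℝ :=
  (2:ℝ) ^ ((j : ℝ) / 2) *
    (if (2:ℝ) ^ j * x - (k : ℝ) ∈ Set.Ico (0:ℝ) (1/2) then 1
     else if (2:ℝ) ^ j * x - (k : ℝ) ∈ Set.Ico (1/2 : ℝ) 1 then -1 else 0)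

section DD

lemma two_zpow_pos (l : ℤ) : (0:ℝ) < (2:ℝ)^l := zpow_pos (by norm_num) l

lemma floorlem (l m : ℤ) (y : ℝ) :
    y ∈ Set.Ico ((m:ℝ) * (2:ℝ)^(-l)) (((m:ℝ)+1) * (2:ℝ)^(-l)) ↔ ⌊(2:ℝ)^l * y⌋ = m := by
  have hp := two_zpow_pos l
  rw [Set.mem_Ico, Int.floor_eq_iff, zpow_neg,
    show (m:ℝ) * ((2:ℝ)^l)⁻¹ = (m:ℝ)/(2:ℝ)^l from (div_eq_mul_inv _ _).symm,
    show ((m:ℝ)+1) * ((2:ℝ)^l)⁻¹ = ((m:ℝ)+1)/(2:ℝ)^l from (div_eq_mul_inv _ _).symm,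
    div_le_iff₀ hp, lt_div_iff₀ hp]
  constructor <;> rintro ⟨u, v⟩ <;> constructor <;>
    nlinarith [mul_comm y ((2:ℝ)^l)]

lemma floor_half (a : ℝ) : ⌊a / 2⌋ = ⌊a⌋ / 2 := by
  have h1 : (⌊a⌋ : ℝ) ≤ a := Int.floor_le a
  have h2 : a < ⌊a⌋ + 1 := Int.lt_floor_add_one a
  have hdm := Int.mul_ediv_add_emod ⌊a⌋ 2
  have hm0 : 0 ≤ ⌊a⌋ % 2 := Int.emod_nonneg _ (by norm_num)
  have hm1 : ⌊a⌋ % 2 < 2 := Int.emod_lt_of_pos _ (by norm_num)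
  rw [Int.floor_eq_iff]
  constructor
  · have h3 : (2 * (⌊a⌋ / 2) : ℤ) ≤ ⌊a⌋ := by omega
    have h4 : ((2 * (⌊a⌋ / 2) : ℤ) : ℝ) ≤ (⌊a⌋ : ℝ) := by exact_mod_cast h3
    push_cast at h4 ⊢
    linarith
  · have h3 : (⌊a⌋ : ℤ) + 1 ≤ 2 * (⌊a⌋ / 2) + 2 := by omega
    have h4 : ((⌊a⌋ + 1 : ℤ) : ℝ) ≤ ((2 * (⌊a⌋ / 2) + 2 : ℤ) : ℝ) := by exact_mod_cast h3
    push_cast at h4 ⊢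
    linarith

lemma floor_mono_level {l' l : ℤ} (h : l' ≤ l) {x y : ℝ}
    (hf : ⌊(2:ℝ)^l * x⌋ = ⌊(2:ℝ)^l * y⌋) : ⌊(2:ℝ)^l' * x⌋ = ⌊(2:ℝ)^l' * y⌋ := by
  have key : ∀ i : ℕ, ⌊(2:ℝ)^(l - i) * x⌋ = ⌊(2:ℝ)^(l - i) * y⌋ := by
    intro i
    induction i with
    | zero => simpa using hf
    | succ i ih =>
      have e : ∀ z : ℝ, (2:ℝ)^(l - (i+1:ℕ)) * z = ((2:ℝ)^(l - i) * z) / 2 := by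
        intro z
        rw [show (l - (i+1:ℕ) : ℤ) = (l - i) + (-1) by push_cast; ring,
          zpow_add₀ (by norm_num : (2:ℝ) ≠ 0)]
        norm_num
        ring
      rw [e x, e y, floor_half, floor_half, ih]
  have := key (l - l').toNat
  rwa [show l - ((l - l').toNat : ℤ) = l' by omega] at this

lemma exists_level {x y : ℝ} (hx : 0 ≤ x) (hy : 0 ≤ y) :
    ∃ l : ℤ, ⌊(2:ℝ)^l * x⌋ = ⌊(2:ℝ)^l * y⌋ := by
  obtain ⟨n, hn⟩ := pow_unbounded_of_one_lt (max x y) (by norm_num : (1:ℝ) < 2)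
  refine ⟨-n, ?_⟩
  have hb : ∀ z : ℝ, 0 ≤ z → z ≤ max x y → ⌊(2:ℝ)^(-n:ℤ) * z⌋ = 0 := by
    intro z hz hzm
    rw [Int.floor_eq_iff]
    have h2 : (2:ℝ)^(-n:ℤ) = ((2:ℝ)^n)⁻¹ := by rw [zpow_neg, zpow_natCast]
    have hpn : (0:ℝ) < 2^n := by positivity
    constructor
    · push_cast; positivity
    · push_cast
      rw [h2]
      have hlt : ((2:ℝ)^n)⁻¹ * z < 1 :=
        calc ((2:ℝ)^n)⁻¹ * z ≤ ((2:ℝ)^n)⁻¹ * max x y :=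
              mul_le_mul_of_nonneg_left hzm (le_of_lt (inv_pos.2 hpn))
          _ < 1 := by rw [inv_mul_lt_iff₀ hpn]; simpa using hn
      linarith
  rw [hb x hx (le_max_left _ _), hb y hy (le_max_right _ _)]

end DD

section Dist

lemma ne_of_floor_ne {l : ℤ} {x y : ℝ} (h : ⌊(2:ℝ)^l * x⌋ ≠ ⌊(2:ℝ)^l * y⌋) : x ≠ y := by
  rintro rfl; exact h rfl

lemma dyadicDist_eq {x y : ℝ} (hx : 0 ≤ x) (hy : 0 ≤ y) {l : ℤ}
    (h1 : ⌊(2:ℝ)^l * x⌋ = ⌊(2:ℝ)^l * y⌋) (h2 : ⌊(2:ℝ)^(l+1) * x⌋ ≠ ⌊(2:ℝ)^(l+1) * y⌋) :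
    dyadicDist x y = (2:ℝ)^(-l) := by
  have hxy : x ≠ y := ne_of_floor_ne h2
  rw [dyadicDist, if_neg hxy]
  set S : Set ℝ := {r : ℝ | ∃ (j : ℤ) (k : ℕ), r = (2:ℝ) ^ (-j) ∧
    x ∈ Set.Ico ((k : ℝ) * (2:ℝ) ^ (-j)) (((k : ℝ) + 1) * (2:ℝ) ^ (-j)) ∧
    y ∈ Set.Ico ((k : ℝ) * (2:ℝ) ^ (-j)) (((k : ℝ) + 1) * (2:ℝ) ^ (-j))} with hS
  have hfx : (0:ℤ) ≤ ⌊(2:ℝ)^l * x⌋ := Int.floor_nonneg.2 (by positivity)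
  have hmem : (2:ℝ)^(-l) ∈ S := by
    refine ⟨l, ⌊(2:ℝ)^l * x⌋.toNat, rfl, ?_, ?_⟩
    · have : ((⌊(2:ℝ)^l * x⌋.toNat : ℕ) : ℝ) = ((⌊(2:ℝ)^l * x⌋ : ℤ) : ℝ) := by
        exact_mod_cast Int.toNat_of_nonneg hfx
      rw [this]
      exact (floorlem l _ x).2 rfl
    · have : ((⌊(2:ℝ)^l * x⌋.toNat : ℕ) : ℝ) = ((⌊(2:ℝ)^l * x⌋ : ℤ) : ℝ) := by
        exact_mod_cast Int.toNat_of_nonneg hfx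
      rw [this]
      exact (floorlem l _ y).2 h1.symm
  have hlb : ∀ r ∈ S, (2:ℝ)^(-l) ≤ r := by
    rintro r ⟨j', k', rfl, hxm, hym⟩
    have hfx' : ⌊(2:ℝ)^j' * x⌋ = (k' : ℤ) := by
      have := (floorlem j' (k' : ℤ) x).1 (by push_cast; exact_mod_cast hxm)
      exact this
    have hfy' : ⌊(2:ℝ)^j' * y⌋ = (k' : ℤ) := by
      have := (floorlem j' (k' : ℤ) y).1 (by push_cast; exact_mod_cast hym)
      exact this
    have hj : j' ≤ l := by
      by_contra hc
      push_neg at hc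
      exact h2 (floor_mono_level (by omega) (hfx'.trans hfy'.symm))
    exact zpow_le_zpow_right₀ (by norm_num) (by omega)
  exact le_antisymm (csInf_le ⟨(2:ℝ)^(-l), hlb⟩ hmem) (le_csInf ⟨_, hmem⟩ hlb)

lemma k_nonneg (K : ℝ → ℝ → ℝ) (k : ℤ → ℝ)
    (hK0 : ∀ x y : ℝ, 0 ≤ x → 0 ≤ y → 0 ≤ K x y)
    (hk : ∀ (j : ℤ) (x y : ℝ), 0 ≤ x → 0 ≤ y → dyadicDist x y = (2:ℝ) ^ j → K x y = k j)
    (m : ℤ) : 0 ≤ k m := by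
  have hy : (0:ℝ) ≤ (2:ℝ)^(m-1) := (two_zpow_pos _).le
  have hd : dyadicDist 0 ((2:ℝ)^(m-1)) = (2:ℝ)^(-(-m)) := by
    apply dyadicDist_eq le_rfl hy
    · rw [mul_zero, show (2:ℝ)^(-m) * (2:ℝ)^(m-1) = (2:ℝ)^(-1:ℤ) by
        rw [← zpow_add₀ (by norm_num : (2:ℝ) ≠ 0)]; congr 1; ring]
      norm_num
    · rw [mul_zero, show (2:ℝ)^(-m+1) * (2:ℝ)^(m-1) = (2:ℝ)^(0:ℤ) by
        rw [← zpow_add₀ (by norm_num : (2:ℝ) ≠ 0)]; congr 1; ring]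
      norm_num
  rw [neg_neg] at hd
  rw [← hk m 0 _ le_rfl hy hd]
  exact hK0 _ _ le_rfl hy

end Dist

section DI

/-- The dyadic interval of level `l` containing `x`. -/
noncomputable def dI (l : ℤ) (x : ℝ) : Set ℝ :=
  Set.Ico ((⌊(2:ℝ)^l * x⌋ : ℝ) * (2:ℝ)^(-l)) (((⌊(2:ℝ)^l * x⌋ : ℝ) + 1) * (2:ℝ)^(-l))

lemma mem_dI {l : ℤ} {x y : ℝ} : y ∈ dI l x ↔ ⌊(2:ℝ)^l * y⌋ = ⌊(2:ℝ)^l * x⌋ :=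
  floorlem l _ y

lemma self_mem_dI {l : ℤ} {x : ℝ} : x ∈ dI l x := mem_dI.2 rfl

lemma dI_subset {l l' : ℤ} (h : l ≤ l') {x : ℝ} : dI l' x ⊆ dI l x := by
  intro y hy
  exact mem_dI.2 (floor_mono_level h (mem_dI.1 hy))

lemma dI_subset_Ici {l : ℤ} {x : ℝ} (hx : 0 ≤ x) : dI l x ⊆ Set.Ici 0 := by
  intro y hy
  have h0 : (0:ℝ) ≤ (⌊(2:ℝ)^l * x⌋ : ℝ) * (2:ℝ)^(-l) := by
    have : (0:ℤ) ≤ ⌊(2:ℝ)^l * x⌋ := Int.floor_nonneg.2 (by positivity)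
    have h2 : (0:ℝ) ≤ (⌊(2:ℝ)^l * x⌋ : ℝ) := by exact_mod_cast this
    positivity
  exact le_trans h0 hy.1

lemma measurableSet_dI {l : ℤ} {x : ℝ} : MeasurableSet (dI l x) := measurableSet_Ico

lemma volume_dI {l : ℤ} {x : ℝ} : volume (dI l x) = ENNReal.ofReal ((2:ℝ)^(-l)) := by
  rw [dI, Real.volume_Ico]
  congr 1
  ring

/-- The set of points at dyadic distance `2^{-l}` from `x`. -/
noncomputable def Ee (l : ℤ) (x : ℝ) : Set ℝ := dI l x \ dI (l+1) x

lemma measurableSet_Ee {l : ℤ} {x : ℝ} : MeasurableSet (Ee l x) :=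
  measurableSet_dI.diff measurableSet_dI

lemma Ee_subset_Ici {l : ℤ} {x : ℝ} (hx : 0 ≤ x) : Ee l x ⊆ Set.Ici 0 :=
  fun y hy => dI_subset_Ici hx hy.1

lemma volume_Ee {l : ℤ} {x : ℝ} : volume (Ee l x) = ENNReal.ofReal ((2:ℝ)^(-l-1)) := by
  rw [Ee, measure_diff (dI_subset (by omega)) measurableSet_dI.nullMeasurableSet
    (by rw [volume_dI]; exact ENNReal.ofReal_ne_top), volume_dI, volume_dI,
    ← ENNReal.ofReal_sub _ (two_zpow_pos _).le]
  congr 1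
  have : (2:ℝ)^(-l) = 2 * (2:ℝ)^(-l-1) := by
    rw [show (-l : ℤ) = 1 + (-l-1) by ring, zpow_add₀ (by norm_num : (2:ℝ) ≠ 0)]
    norm_num
  rw [show (-(l+1) : ℤ) = -l-1 by ring]
  linarith

lemma Ee_disjoint {x : ℝ} : Pairwise (Function.onFun Disjoint (fun l => Ee l x)) := by
  have key : ∀ l l' : ℤ, l < l' → Disjoint (Ee l x) (Ee l' x) := by
    intro l l' hll
    refine Set.disjoint_left.2 fun y hy hy' => ?_
    exact hy.2 (dI_subset (by omega) hy'.1)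
  intro l l' hne
  rcases lt_or_gt_of_ne hne with h | h
  · exact key _ _ h
  · exact (key _ _ h).symm

lemma mem_Ee_cover {x y : ℝ} (hx : 0 ≤ x) (hy : 0 ≤ y) (hxy : y ≠ x) :
    ∃ l : ℤ, y ∈ Ee l x := by
  classical
  set P : ℤ → Prop := fun l => ⌊(2:ℝ)^l * y⌋ = ⌊(2:ℝ)^l * x⌋ with hP
  have hinh : ∃ l, P l := by
    obtain ⟨l, hl⟩ := exists_level hy hx
    exact ⟨l, hl⟩
  have habs : |x - y| > 0 := abs_pos.2 (sub_ne_zero.2 (Ne.symm hxy))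
  obtain ⟨N, hN⟩ := pow_unbounded_of_one_lt (1 / |x - y|) (by norm_num : (1:ℝ) < 2)
  have hbdd : ∃ b : ℤ, ∀ l : ℤ, P l → l ≤ b := by
    refine ⟨N, fun l hl => ?_⟩
    by_contra hc
    push_neg at hc
    -- 2^l * |x - y| < 1 since floors are equal
    have h1 : |(2:ℝ)^l * x - (2:ℝ)^l * y| < 1 := by
      have hfl := hl
      have hle1 : ((⌊(2:ℝ)^l * x⌋ : ℝ)) ≤ (2:ℝ)^l * x := Int.floor_le _
      have hlt1 : (2:ℝ)^l * x < ⌊(2:ℝ)^l * x⌋ + 1 := Int.lt_floor_add_one _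
      have hle2 : ((⌊(2:ℝ)^l * y⌋ : ℝ)) ≤ (2:ℝ)^l * y := Int.floor_le _
      have hlt2 : (2:ℝ)^l * y < ⌊(2:ℝ)^l * y⌋ + 1 := Int.lt_floor_add_one _
      rw [hfl] at hle2 hlt2
      rw [abs_lt]
      constructor <;> linarith
    have h2 : (2:ℝ)^l * |x - y| < 1 := by
      calc (2:ℝ)^l * |x - y| = |(2:ℝ)^l * (x - y)| := by
            rw [abs_mul, abs_of_pos (two_zpow_pos l)]
        _ = |(2:ℝ)^l * x - (2:ℝ)^l * y| := by ring_nf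
        _ < 1 := h1
    have h3 : (2:ℝ)^N < (2:ℝ)^l := by
      rw [← zpow_natCast (2:ℝ) N]
      exact zpow_lt_zpow_right₀ (by norm_num) (by exact_mod_cast hc)
    have h4 : (1:ℝ)/|x - y| * |x-y| < 2^N * |x-y| := by
      exact mul_lt_mul_of_pos_right hN habs
    rw [one_div, inv_mul_cancel₀ (ne_of_gt habs)] at h4
    nlinarith [two_zpow_pos l]
  obtain ⟨L, hPL, hLmax⟩ := Int.exists_greatest_of_bdd hbdd hinh
  refine ⟨L, mem_dI.2 hPL, fun hc => ?_⟩
  have := hLmax (L+1) (mem_dI.1 hc)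
  omega

lemma K_const_on_Ee {K : ℝ → ℝ → ℝ} {k : ℤ → ℝ}
    (hk : ∀ (j : ℤ) (x y : ℝ), 0 ≤ x → 0 ≤ y → dyadicDist x y = (2:ℝ) ^ j → K x y = k j)
    {l : ℤ} {x y : ℝ} (hx : 0 ≤ x) (hy : y ∈ Ee l x) : K x y = k (-l) := by
  have hy0 : 0 ≤ y := Ee_subset_Ici hx hy
  apply hk (-l) x y hx hy0
  rw [show ((2:ℝ)^(-l:ℤ)) = (2:ℝ)^(-l:ℤ) from rfl]
  have h1 : ⌊(2:ℝ)^l * x⌋ = ⌊(2:ℝ)^l * y⌋ := (mem_dI.1 hy.1).symm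
  have h2 : ⌊(2:ℝ)^(l+1) * x⌋ ≠ ⌊(2:ℝ)^(l+1) * y⌋ := fun hc => hy.2 (mem_dI.2 hc.symm)
  exact dyadicDist_eq hx hy0 h1 h2

end DI

section Integrals

variable {K : ℝ → ℝ → ℝ} {k : ℤ → ℝ}

/-- Auxiliary simple-function model for `y ↦ K x y` on `[0,∞)`. -/
noncomputable def Gfun (k : ℤ → ℝ) (x : ℝ) : ℝ → ℝ≥0∞ :=
  fun y => ∑' l : ℤ, (Ee l x).indicator (fun _ => ENNReal.ofReal (k (-l))) y

lemma measurable_Gfun {x : ℝ} : Measurable (Gfun k x) :=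
  Measurable.ennreal_tsum fun _ => measurable_const.indicator measurableSet_Ee

lemma Gfun_ae
    (hk : ∀ (j : ℤ) (x y : ℝ), 0 ≤ x → 0 ≤ y → dyadicDist x y = (2:ℝ) ^ j → K x y = k j)
    {x : ℝ} (hx : 0 ≤ x) :
    (fun y => ENNReal.ofReal (K x y)) =ᵐ[volume.restrict (Set.Ici 0)] Gfun k x := by
  have hne : ∀ᵐ (y : ℝ) ∂(volume.restrict (Set.Ici 0)), y ≠ x := by
    apply Filter.Eventually.filter_mono (ae_mono Measure.restrict_le_self)
    rw [ae_iff]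
    simp only [not_not, Set.setOf_eq_eq_singleton]
    exact measure_singleton x
  filter_upwards [hne, ae_restrict_mem measurableSet_Ici] with y hyx hy0
  obtain ⟨L, hL⟩ := mem_Ee_cover hx hy0 hyx
  have hGy : Gfun k x y = ENNReal.ofReal (k (-L)) := by
    rw [show Gfun k x y = ∑' l : ℤ, (Ee l x).indicator (fun _ => ENNReal.ofReal (k (-l))) y
      from rfl, tsum_eq_single L]
    · rw [Set.indicator_of_mem hL]
    · intro l hl
      rw [Set.indicator_of_notMem (Set.disjoint_left.1 (Ee_disjoint hl) · hL)]
  rw [hGy, K_const_on_Ee hk hx hL]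

lemma lintegral_K
    (hknn : ∀ m, 0 ≤ k m)
    (hk : ∀ (j : ℤ) (x y : ℝ), 0 ≤ x → 0 ≤ y → dyadicDist x y = (2:ℝ) ^ j → K x y = k j)
    {x : ℝ} (hx : 0 ≤ x) :
    ∫⁻ y in Set.Ici (0:ℝ), ENNReal.ofReal (K x y) =
      ∑' l : ℤ, ENNReal.ofReal (k (-l) * (2:ℝ)^(-l-1)) := by
  rw [lintegral_congr_ae (Gfun_ae hk hx),
    show Gfun k x = fun y => ∑' l : ℤ, (Ee l x).indicator (fun _ => ENNReal.ofReal (k (-l))) y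
      from rfl]
  rw [lintegral_tsum fun l => (measurable_const.indicator measurableSet_Ee).aemeasurable]
  congr 1
  funext l
  rw [lintegral_indicator measurableSet_Ee, setLIntegral_const,
    Measure.restrict_apply measurableSet_Ee,
    Set.inter_eq_self_of_subset_left (Ee_subset_Ici hx), volume_Ee,
    ENNReal.ofReal_mul (hknn _)]

lemma integrableOn_K
    (hK0 : ∀ x y : ℝ, 0 ≤ x → 0 ≤ y → 0 ≤ K x y)
    (hknn : ∀ m, 0 ≤ k m)
    (hk : ∀ (j : ℤ) (x y : ℝ), 0 ≤ x → 0 ≤ y → dyadicDist x y = (2:ℝ) ^ j → K x y = k j)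
    (hT : (∑' l : ℤ, ENNReal.ofReal (k (-l) * (2:ℝ)^(-l-1))) ≠ ⊤)
    {x : ℝ} (hx : 0 ≤ x) : IntegrableOn (K x) (Set.Ici 0) volume := by
  have hnn : 0 ≤ᵐ[volume.restrict (Set.Ici (0:ℝ))] K x := by
    filter_upwards [ae_restrict_mem measurableSet_Ici] with y hy
    exact hK0 x y hx hy
  have hae' : K x =ᵐ[volume.restrict (Set.Ici (0:ℝ))] fun y => (Gfun k x y).toReal := by
    filter_upwards [Gfun_ae hk hx, hnn] with y h1 h2
    rw [← h1, ENNReal.toReal_ofReal h2]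
  constructor
  · exact ((ENNReal.measurable_toReal.comp measurable_Gfun).aestronglyMeasurable).congr hae'.symm
  · rw [hasFiniteIntegral_iff_ofReal hnn, lintegral_K hknn hk hx]
    exact hT.lt_top

lemma setIntegral_Ee
    (hk : ∀ (j : ℤ) (x y : ℝ), 0 ≤ x → 0 ≤ y → dyadicDist x y = (2:ℝ) ^ j → K x y = k j)
    {x : ℝ} (hx : 0 ≤ x) (l : ℤ) :
    ∫ y in Ee l x, K x y = k (-l) * (2:ℝ)^(-l-1) := by
  rw [setIntegral_congr_fun measurableSet_Ee fun y hy => K_const_on_Ee hk hx hy,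
    setIntegral_const, measureReal_def, volume_Ee, ENNReal.toReal_ofReal (two_zpow_pos _).le,
    smul_eq_mul, mul_comm]

lemma setIntegral_dI_succ
    (hk : ∀ (j : ℤ) (x y : ℝ), 0 ≤ x → 0 ≤ y → dyadicDist x y = (2:ℝ) ^ j → K x y = k j)
    {x : ℝ} (hx : 0 ≤ x) (hint : IntegrableOn (K x) (Set.Ici 0) volume) (j : ℤ) :
    ∫ y in dI (j+1) x, K x y = ∑' m : ℕ, k (-(j+1+m)) * (2:ℝ)^(-(j+1+m)-1) := by
  have hUeq : dI (j+1) x \ {x} = ⋃ m : ℕ, Ee (j+1+m) x := by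
    ext y
    constructor
    · rintro ⟨hyI, hyx⟩
      have hy0 : 0 ≤ y := dI_subset_Ici hx hyI
      obtain ⟨L, hL⟩ := mem_Ee_cover hx hy0 (by simpa using hyx)
      have hLge : j+1 ≤ L := by
        by_contra hc
        push_neg at hc
        exact hL.2 (mem_dI.2 (floor_mono_level (by omega) (mem_dI.1 hyI)))
      refine Set.mem_iUnion.2 ⟨(L - (j+1)).toNat, ?_⟩
      rwa [show (j+1+((L-(j+1)).toNat:ℤ)) = L by omega]
    · intro hy
      obtain ⟨m, hm⟩ := Set.mem_iUnion.1 hy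
      refine ⟨dI_subset (by omega) hm.1, fun hc => ?_⟩
      rw [Set.mem_singleton_iff] at hc
      subst hc
      exact hm.2 self_mem_dI
  have haeset : dI (j+1) x =ᵐ[volume] ⋃ m : ℕ, Ee (j+1+m) x := by
    rw [← hUeq]
    refine (MeasureTheory.ae_eq_set).2 ⟨?_, ?_⟩
    · refine measure_mono_null (fun y hy => ?_) (measure_singleton x)
      rcases hy with ⟨h1, h2⟩
      by_contra hyx
      exact h2 ⟨h1, fun hc => hyx (Set.mem_singleton_iff.1 hc)⟩
    · exact measure_mono_null (fun y hy => (hy.2 hy.1.1).elim) (measure_singleton x)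
  have hdisj : Pairwise (Function.onFun Disjoint fun m : ℕ => Ee (j+1+m) x) := by
    intro m m' hmm
    exact Ee_disjoint (x := x) (by omega : (j+1+m : ℤ) ≠ (j+1+m' : ℤ))
  rw [setIntegral_congr_set haeset,
    integral_iUnion (fun m => measurableSet_Ee) hdisj
      (hint.mono_set (Set.iUnion_subset fun m => Ee_subset_Ici hx))]
  congr 1
  funext m
  exact setIntegral_Ee hk hx _

end Integrals

section Lambda

lemma summable_c {k : ℤ → ℝ} (hknn : ∀ m, 0 ≤ k m)
    (hT : (∑' l : ℤ, ENNReal.ofReal (k (-l) * (2:ℝ)^(-l-1))) ≠ ⊤) :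
    Summable fun l : ℤ => k (-l) * (2:ℝ)^(-l-1) := by
  have h := ENNReal.summable_toReal hT
  refine h.congr fun l => ?_
  exact ENNReal.toReal_ofReal (mul_nonneg (hknn _) (two_zpow_pos _).le)

lemma Lambda_eq {k : ℤ → ℝ} (hsum : Summable fun l : ℤ => k (-l) * (2:ℝ)^(-l-1)) (j : ℤ) :
    LambdaOf k j = (∑' m : ℕ, k (-(j+1+m)) * (2:ℝ)^(-(j+1+m)-1)) - k (-j) * (2:ℝ)^(-j-1) := by
  have h2ne : (2:ℝ) ≠ 0 := by norm_num
  have hui : Summable (fun m : ℕ => k (-(j+1+(m:ℤ))) * (2:ℝ)^(-(j+1+(m:ℤ)))) := by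
    have h1 : Summable ((fun l : ℤ => k (-l) * (2:ℝ)^(-l-1)) ∘ fun m : ℕ => j+1+(m:ℤ)) :=
      hsum.comp_injective fun a b hab => by
        have : j+1+(a:ℤ) = j+1+(b:ℤ) := hab
        omega
    have h2 := h1.mul_left 2
    refine h2.congr fun m => ?_
    show 2 * (k (-(j+1+(m:ℤ))) * (2:ℝ)^(-(j+1+(m:ℤ))-1)) = _
    rw [show (-(j+1+(m:ℤ))-1 : ℤ) = -(j+1+(m:ℤ)) + (-1) by ring, zpow_add₀ h2ne]
    norm_num
    ring
  set W := ∑' m : ℕ, k (-(j+1+(m:ℤ))) * (2:ℝ)^(-(j+1+(m:ℤ))) with hWdef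
  have hW : HasSum (fun m : ℕ => k (-(j+1+(m:ℤ))) * (2:ℝ)^(-(j+1+(m:ℤ)))) W := hui.hasSum
  have hv : HasSum (fun m : ℕ => k (-(j+(m:ℤ))) * (2:ℝ)^(-(j+(m:ℤ))))
      (W + k (-j) * (2:ℝ)^(-j)) := by
    have h1 : HasSum (fun m : ℕ => k (-(j+((m+1:ℕ):ℤ))) * (2:ℝ)^(-(j+((m+1:ℕ):ℤ)))) W := by
      refine HasSum.congr_fun hW fun m => ?_
      congr 2 <;> push_cast <;> ring
    have h2 := (hasSum_nat_add_iff
      (f := fun m : ℕ => k (-(j+(m:ℤ))) * (2:ℝ)^(-(j+(m:ℤ)))) 1).1 h1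
    simpa using h2
  have hA : HasSum (fun m : ℕ => alphaOf k (j+1+(m:ℤ)))
      (W - (1/2) * (W + k (-j) * (2:ℝ)^(-j))) := by
    have h3 := hW.sub (hv.mul_left (1/2))
    refine HasSum.congr_fun h3 fun m => ?_
    rw [alphaOf, show (-(j+1+(m:ℤ))+1 : ℤ) = -(j+(m:ℤ)) by ring,
      show (-(j+1+(m:ℤ)) : ℤ) = -(j+(m:ℤ)) + (-1) by ring, zpow_add₀ h2ne]
    norm_num
    ring
  have hL : LambdaOf k j = W - (1/2) * (W + k (-j) * (2:ℝ)^(-j)) := by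
    rw [LambdaOf]
    exact hA.tsum_eq
  have hS : (∑' m : ℕ, k (-(j+1+(m:ℤ))) * (2:ℝ)^(-(j+1+(m:ℤ))-1)) = W / 2 := by
    have h4 : HasSum (fun m : ℕ => (k (-(j+1+(m:ℤ))) * (2:ℝ)^(-(j+1+(m:ℤ)))) / 2) (W / 2) :=
      hW.div_const 2
    refine ((HasSum.congr_fun h4 fun m => ?_).tsum_eq)
    rw [show (-(j+1+(m:ℤ))-1 : ℤ) = -(j+1+(m:ℤ)) + (-1) by ring, zpow_add₀ h2ne]
    norm_num
    ring
  rw [hL, hS, show (-j-1 : ℤ) = -j + (-1) by ring, zpow_add₀ h2ne]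
  norm_num
  ring

end Lambda

section Haar

lemma cond1_iff {j : ℤ} {n : ℕ} {y : ℝ} :
    (2:ℝ)^j * y - (n:ℝ) ∈ Set.Ico (0:ℝ) (1/2) ↔ ⌊(2:ℝ)^(j+1) * y⌋ = 2*(n:ℤ) := by
  have h2 : (2:ℝ)^(j+1) * y = 2*((2:ℝ)^j * y) := by
    rw [zpow_add_one₀ (by norm_num : (2:ℝ) ≠ 0)]; ring
  rw [Set.mem_Ico, Int.floor_eq_iff, h2]
  push_cast
  constructor <;> rintro ⟨u, v⟩ <;> constructor <;> linarith

lemma cond2_iff {j : ℤ} {n : ℕ} {y : ℝ} :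
    (2:ℝ)^j * y - (n:ℝ) ∈ Set.Ico (1/2:ℝ) 1 ↔ ⌊(2:ℝ)^(j+1) * y⌋ = 2*(n:ℤ)+1 := by
  have h2 : (2:ℝ)^(j+1) * y = 2*((2:ℝ)^j * y) := by
    rw [zpow_add_one₀ (by norm_num : (2:ℝ) ≠ 0)]; ring
  rw [Set.mem_Ico, Int.floor_eq_iff, h2]
  push_cast
  constructor <;> rintro ⟨u, v⟩ <;> constructor <;> linarith

lemma haar_floor_left {j : ℤ} {n : ℕ} {y : ℝ} (h : ⌊(2:ℝ)^(j+1) * y⌋ = 2*(n:ℤ)) :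
    haarFn j n y = (2:ℝ)^((j:ℝ)/2) := by
  rw [haarFn, if_pos (cond1_iff.2 h), mul_one]

lemma haar_floor_right {j : ℤ} {n : ℕ} {y : ℝ} (h : ⌊(2:ℝ)^(j+1) * y⌋ = 2*(n:ℤ)+1) :
    haarFn j n y = -(2:ℝ)^((j:ℝ)/2) := by
  rw [haarFn, if_neg (fun hc => by have := cond1_iff.1 hc; omega), if_pos (cond2_iff.2 h)]
  ring

lemma haar_zero {j : ℤ} {n : ℕ} {y : ℝ} (h : ⌊(2:ℝ)^j * y⌋ ≠ (n:ℤ)) :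
    haarFn j n y = 0 := by
  have hc1 : ¬ ((2:ℝ)^j * y - (n:ℝ) ∈ Set.Ico (0:ℝ) (1/2)) := by
    intro hc
    rcases Set.mem_Ico.1 hc with ⟨u, v⟩
    exact h (Int.floor_eq_iff.2 ⟨by push_cast; linarith, by push_cast; linarith⟩)
  have hc2 : ¬ ((2:ℝ)^j * y - (n:ℝ) ∈ Set.Ico (1/2:ℝ) 1) := by
    intro hc
    rcases Set.mem_Ico.1 hc with ⟨u, v⟩
    exact h (Int.floor_eq_iff.2 ⟨by push_cast; linarith, by push_cast; linarith⟩)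
  rw [haarFn, if_neg hc1, if_neg hc2, mul_zero]

lemma floor_succ_split {j : ℤ} {n : ℤ} {z : ℝ} (h : ⌊(2:ℝ)^j * z⌋ = n) :
    ⌊(2:ℝ)^(j+1) * z⌋ = 2*n ∨ ⌊(2:ℝ)^(j+1) * z⌋ = 2*n+1 := by
  rcases Int.floor_eq_iff.1 h with ⟨h1, h2⟩
  have h3 : (2:ℝ)^(j+1) * z = 2*((2:ℝ)^j * z) := by
    rw [zpow_add_one₀ (by norm_num : (2:ℝ) ≠ 0)]; ring
  have hle : (2*n : ℤ) ≤ ⌊(2:ℝ)^(j+1) * z⌋ := Int.le_floor.2 (by rw [h3]; push_cast; linarith)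
  have hlt : ⌊(2:ℝ)^(j+1) * z⌋ < 2*n+2 := Int.floor_lt.2 (by rw [h3]; push_cast; linarith)
  omega

lemma floor_of_double {j : ℤ} {n : ℤ} {z : ℝ}
    (h : ⌊(2:ℝ)^(j+1) * z⌋ = 2*n ∨ ⌊(2:ℝ)^(j+1) * z⌋ = 2*n+1) : ⌊(2:ℝ)^j * z⌋ = n := by
  have h3 : (2:ℝ)^(j+1) * z = 2*((2:ℝ)^j * z) := by
    rw [zpow_add_one₀ (by norm_num : (2:ℝ) ≠ 0)]; ring
  rcases h with h | h <;> rcases Int.floor_eq_iff.1 h with ⟨h1, h2⟩ <;>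
    rw [h3] at h1 h2 <;> push_cast at h1 h2 <;>
    exact Int.floor_eq_iff.2 ⟨by push_cast; linarith, by push_cast; linarith⟩

end Haar

section Outside

lemma K_const_outside {K : ℝ → ℝ → ℝ}
    (hKdist : ∀ x y x' y' : ℝ, 0 ≤ x → 0 ≤ y → 0 ≤ x' → 0 ≤ y' →
      dyadicDist x y = dyadicDist x' y' → K x y = K x' y')
    {x : ℝ} (hx : 0 ≤ x) {j : ℤ} {n : ℤ} (hn : 0 ≤ n)
    (hxI : ⌊(2:ℝ)^j * x⌋ ≠ n) {y y' : ℝ}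
    (hy : ⌊(2:ℝ)^j * y⌋ = n) (hy' : ⌊(2:ℝ)^j * y'⌋ = n) :
    K x y = K x y' := by
  have hnn : ∀ z : ℝ, ⌊(2:ℝ)^j * z⌋ = n → 0 ≤ z := by
    intro z hz
    have h1 : ((n:ℤ):ℝ) ≤ (2:ℝ)^j * z := hz ▸ Int.floor_le _
    have h2 : (0:ℝ) ≤ (n:ℤ) := by exact_mod_cast hn
    by_contra hc
    push_neg at hc
    nlinarith [two_zpow_pos j]
  have hy0 := hnn y hy
  have hy'0 := hnn y' hy'
  apply hKdist x y x y' hx hy0 hx hy'0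
  have hxy : x ≠ y := fun hc => hxI (hc ▸ hy)
  have hxy' : x ≠ y' := fun hc => hxI (hc ▸ hy')
  rw [dyadicDist, if_neg hxy, dyadicDist, if_neg hxy']
  congr 1
  have key : ∀ a b : ℝ, ⌊(2:ℝ)^j * a⌋ = n → ⌊(2:ℝ)^j * b⌋ = n →
      ∀ r, (∃ (j' : ℤ) (k' : ℕ), r = (2:ℝ) ^ (-j') ∧
        x ∈ Set.Ico ((k' : ℝ) * (2:ℝ) ^ (-j')) (((k' : ℝ) + 1) * (2:ℝ) ^ (-j')) ∧
        a ∈ Set.Ico ((k' : ℝ) * (2:ℝ) ^ (-j')) (((k' : ℝ) + 1) * (2:ℝ) ^ (-j'))) →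
      (∃ (j' : ℤ) (k' : ℕ), r = (2:ℝ) ^ (-j') ∧
        x ∈ Set.Ico ((k' : ℝ) * (2:ℝ) ^ (-j')) (((k' : ℝ) + 1) * (2:ℝ) ^ (-j')) ∧
        b ∈ Set.Ico ((k' : ℝ) * (2:ℝ) ^ (-j')) (((k' : ℝ) + 1) * (2:ℝ) ^ (-j'))) := by
    rintro a b ha hb r ⟨j', k', rfl, hxm, ham⟩
    refine ⟨j', k', rfl, hxm, ?_⟩
    have hfx' : ⌊(2:ℝ)^j' * x⌋ = (k' : ℤ) :=
      (floorlem j' (k' : ℤ) x).1 (by push_cast; exact_mod_cast hxm)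
    have hfa : ⌊(2:ℝ)^j' * a⌋ = (k' : ℤ) :=
      (floorlem j' (k' : ℤ) a).1 (by push_cast; exact_mod_cast ham)
    have hj' : j' ≤ j := by
      by_contra hc
      push_neg at hc
      exact hxI ((floor_mono_level (le_of_lt hc) (hfx'.trans hfa.symm)).trans ha)
    have hfb : ⌊(2:ℝ)^j' * b⌋ = (k' : ℤ) :=
      (floor_mono_level hj' (ha.trans hb.symm)).symm.trans hfa
    have := (floorlem j' (k' : ℤ) b).2 hfb
    push_cast at this ⊢
    exact_mod_cast this
  ext r
  exact ⟨key y y' hy hy' r, key y' y hy' hy r⟩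

end Outside

/-- Theorem 3: the Haar functions are eigenfunctions of the operator
`Tf(x) = ∫ K(x,y) f(y) dy` associated with a kernel `K ∈ 𝒦`, with eigenvalues
`Λ_{j(h)}`: for every Haar function `h = h^j_k`, `Th(x) = Λ_j h(x)` for all `x ∈ ℝ⁺`. -/
theorem haar_eigenfunctions (K : ℝ → ℝ → ℝ) (k : ℤ → ℝ)
    (hK0 : ∀ x y : ℝ, 0 ≤ x → 0 ≤ y → 0 ≤ K x y)
    (hKdist : ∀ x y x' y' : ℝ, 0 ≤ x → 0 ≤ y → 0 ≤ x' → 0 ≤ y' →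
      dyadicDist x y = dyadicDist x' y' → K x y = K x' y')
    (x₀ : ℝ) (hx₀ : 0 ≤ x₀)
    (hKnorm : (∫ y in Set.Ici (0:ℝ), K x₀ y) = 1)
    (hk : ∀ (j : ℤ) (x y : ℝ), 0 ≤ x → 0 ≤ y → dyadicDist x y = (2:ℝ) ^ j → K x y = k j) :
    ∀ (j : ℤ) (n : ℕ) (x : ℝ), 0 ≤ x →
      (∫ y in Set.Ici (0:ℝ), K x y * haarFn j n y) = LambdaOf k j * haarFn j n x := by
  intro j n x hx
  have hknn : ∀ m, 0 ≤ k m := k_nonneg K k hK0 hk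
  have hIx₀ : IntegrableOn (K x₀) (Set.Ici 0) volume := by
    by_contra h
    rw [MeasureTheory.integral_undef h] at hKnorm
    norm_num at hKnorm
  have hT1 : (∑' l : ℤ, ENNReal.ofReal (k (-l) * (2:ℝ)^(-l-1))) = 1 := by
    rw [← lintegral_K hknn hk hx₀,
      ← MeasureTheory.ofReal_integral_eq_lintegral_ofReal hIx₀ ?_, hKnorm, ENNReal.ofReal_one]
    filter_upwards [ae_restrict_mem measurableSet_Ici] with y hy
    exact hK0 _ _ hx₀ hy
  have hT : (∑' l : ℤ, ENNReal.ofReal (k (-l) * (2:ℝ)^(-l-1))) ≠ ⊤ := by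
    rw [hT1]; exact ENNReal.one_ne_top
  have hsum := summable_c hknn hT
  have hint : IntegrableOn (K x) (Set.Ici 0) volume := integrableOn_K hK0 hknn hk hT hx
  by_cases hI : ⌊(2:ℝ)^j * x⌋ = (n:ℤ)
  · -- x lies in the supporting interval
    have hxsplit := floor_succ_split hI
    have hptw : ∀ y : ℝ, K x y * haarFn j n y
        = haarFn j n x * (dI (j+1) x).indicator (K x) y
          - haarFn j n x * (Ee j x).indicator (K x) y := by
      intro y
      by_cases hyI : ⌊(2:ℝ)^j * y⌋ = (n:ℤ)
      · have hysplit := floor_succ_split hyI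
        rcases hxsplit with hx1 | hx1
        · rw [haar_floor_left hx1]
          rcases hysplit with hy1 | hy1
          · rw [haar_floor_left hy1,
              Set.indicator_of_mem (mem_dI.2 (hy1.trans hx1.symm)) (K x),
              Set.indicator_of_notMem (fun hc => hc.2 (mem_dI.2 (hx1 ▸ hy1)))]
            ring
          · rw [haar_floor_right hy1,
              Set.indicator_of_notMem (fun hc => by
                have := mem_dI.1 hc; omega),
              Set.indicator_of_mem (show y ∈ Ee j x from ⟨mem_dI.2 (hyI.trans hI.symm),
                fun hc => by have := mem_dI.1 hc; omega⟩) (K x)]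
            ring
        · rw [haar_floor_right hx1]
          rcases hysplit with hy1 | hy1
          · rw [haar_floor_left hy1,
              Set.indicator_of_notMem (fun hc => by
                have := mem_dI.1 hc; omega),
              Set.indicator_of_mem (show y ∈ Ee j x from ⟨mem_dI.2 (hyI.trans hI.symm),
                fun hc => by have := mem_dI.1 hc; omega⟩) (K x)]
            ring
          · rw [haar_floor_right hy1,
              Set.indicator_of_mem (mem_dI.2 (hy1.trans hx1.symm)) (K x),
              Set.indicator_of_notMem (fun hc => hc.2 (mem_dI.2 (hx1 ▸ hy1)))]
            ring
      · rw [haar_zero hyI,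
          Set.indicator_of_notMem (fun hc => by
            have h1 := floor_mono_level (by omega : j ≤ j+1) (mem_dI.1 hc)
            exact hyI (h1.trans hI)),
          Set.indicator_of_notMem (fun hc => hyI ((mem_dI.1 hc.1).trans hI))]
        ring
    have hind1 : Integrable ((dI (j+1) x).indicator (K x)) (volume.restrict (Set.Ici 0)) :=
      hint.indicator measurableSet_dI
    have hind2 : Integrable ((Ee j x).indicator (K x)) (volume.restrict (Set.Ici 0)) :=
      hint.indicator measurableSet_Ee
    calc ∫ y in Set.Ici (0:ℝ), K x y * haarFn j n y
        = ∫ y in Set.Ici (0:ℝ),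
            (haarFn j n x * (dI (j+1) x).indicator (K x) y
              - haarFn j n x * (Ee j x).indicator (K x) y) :=
          integral_congr_ae (Filter.Eventually.of_forall hptw)
      _ = haarFn j n x * (∫ y in Set.Ici (0:ℝ), (dI (j+1) x).indicator (K x) y)
            - haarFn j n x * ∫ y in Set.Ici (0:ℝ), (Ee j x).indicator (K x) y := by
          rw [integral_sub (hind1.const_mul _) (hind2.const_mul _),
            integral_const_mul, integral_const_mul]
      _ = haarFn j n x * (∫ y in dI (j+1) x, K x y)
            - haarFn j n x * ∫ y in Ee j x, K x y := by
          rw [integral_indicator measurableSet_dI, integral_indicator measurableSet_Ee,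
            Measure.restrict_restrict measurableSet_dI,
            Set.inter_eq_self_of_subset_left (dI_subset_Ici hx),
            Measure.restrict_restrict measurableSet_Ee,
            Set.inter_eq_self_of_subset_left (Ee_subset_Ici hx)]
      _ = haarFn j n x *
            ((∑' m : ℕ, k (-(j+1+(m:ℤ))) * (2:ℝ)^(-(j+1+(m:ℤ))-1)) - k (-j) * (2:ℝ)^(-j-1)) := by
          rw [setIntegral_dI_succ hk hx hint j, setIntegral_Ee hk hx j]
          ring
      _ = LambdaOf k j * haarFn j n x := by rw [Lambda_eq hsum j]; ring
  · -- x outside the supporting interval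
    rw [haar_zero hI, mul_zero]
    set y₀ : ℝ := ((n:ℤ):ℝ) * (2:ℝ)^(-j) with hy₀def
    have hy₀f : ⌊(2:ℝ)^j * y₀⌋ = (n:ℤ) := by
      apply (floorlem j (n:ℤ) y₀).1
      constructor
      · exact le_rfl
      · nlinarith [two_zpow_pos (-j)]
    have hKc : ∀ y : ℝ, ⌊(2:ℝ)^j * y⌋ = (n:ℤ) → K x y = K x y₀ := fun y hy =>
      K_const_outside hKdist hx (Int.natCast_nonneg n) hI hy hy₀f
    set c := K x y₀ with hcdef
    set A : Set ℝ := Set.Ico (((2*(n:ℤ) : ℤ):ℝ) * (2:ℝ)^(-(j+1)))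
      ((((2*(n:ℤ) : ℤ):ℝ)+1) * (2:ℝ)^(-(j+1))) with hAdef
    set B : Set ℝ := Set.Ico (((2*(n:ℤ)+1 : ℤ):ℝ) * (2:ℝ)^(-(j+1)))
      ((((2*(n:ℤ)+1 : ℤ):ℝ)+1) * (2:ℝ)^(-(j+1))) with hBdef
    have hmemA : ∀ y : ℝ, y ∈ A ↔ ⌊(2:ℝ)^(j+1) * y⌋ = 2*(n:ℤ) := fun y => floorlem (j+1) _ y
    have hmemB : ∀ y : ℝ, y ∈ B ↔ ⌊(2:ℝ)^(j+1) * y⌋ = 2*(n:ℤ)+1 := fun y => floorlem (j+1) _ y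
    have hptw : ∀ y : ℝ, (Set.Ici (0:ℝ)).indicator (fun y => K x y * haarFn j n y) y
        = c * (A.indicator (fun _ => (2:ℝ)^((j:ℝ)/2)) y
            - B.indicator (fun _ => (2:ℝ)^((j:ℝ)/2)) y) := by
      intro y
      by_cases hyA : y ∈ A
      · have hfA := (hmemA y).1 hyA
        have hyj : ⌊(2:ℝ)^j * y⌋ = (n:ℤ) := floor_of_double (Or.inl hfA)
        have hy0 : (0:ℝ) ≤ y := by
          have h1 : (((2*(n:ℤ) : ℤ)):ℝ) * (2:ℝ)^(-(j+1)) ≤ y := hyA.1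
          have h2 : (0:ℝ) ≤ (((2*(n:ℤ) : ℤ)):ℝ) := by positivity
          nlinarith [two_zpow_pos (-(j+1))]
        rw [Set.indicator_of_mem (Set.mem_Ici.2 hy0) (fun y => K x y * haarFn j n y),
          Set.indicator_of_mem hyA, Set.indicator_of_notMem (fun hc => by
            have := (hmemB y).1 hc; omega),
          haar_floor_left hfA, hKc y hyj]
        ring
      · by_cases hyB : y ∈ B
        · have hfB := (hmemB y).1 hyB
          have hyj : ⌊(2:ℝ)^j * y⌋ = (n:ℤ) := floor_of_double (Or.inr hfB)
          have hy0 : (0:ℝ) ≤ y := by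
            have h1 : (((2*(n:ℤ)+1 : ℤ)):ℝ) * (2:ℝ)^(-(j+1)) ≤ y := hyB.1
            have h2 : (0:ℝ) ≤ (((2*(n:ℤ)+1 : ℤ)):ℝ) := by positivity
            nlinarith [two_zpow_pos (-(j+1))]
          rw [Set.indicator_of_mem (Set.mem_Ici.2 hy0) (fun y => K x y * haarFn j n y),
            Set.indicator_of_mem hyB, Set.indicator_of_notMem hyA,
            haar_floor_right hfB, hKc y hyj]
          ring
        · have hyj : ⌊(2:ℝ)^j * y⌋ ≠ (n:ℤ) := by
            intro hc
            rcases floor_succ_split hc with h | h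
            · exact hyA ((hmemA y).2 h)
            · exact hyB ((hmemB y).2 h)
          rw [Set.indicator_of_notMem hyA, Set.indicator_of_notMem hyB]
          by_cases hy0 : y ∈ Set.Ici (0:ℝ)
          · rw [Set.indicator_of_mem hy0 (fun y => K x y * haarFn j n y), haar_zero hyj]
            ring
          · rw [Set.indicator_of_notMem hy0]
            ring
    have hvolA : volume A = ENNReal.ofReal ((2:ℝ)^(-(j+1))) := by
      rw [hAdef, Real.volume_Ico]; congr 1; ring
    have hvolB : volume B = ENNReal.ofReal ((2:ℝ)^(-(j+1))) := by
      rw [hBdef, Real.volume_Ico]; congr 1; ring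
    have hintA : Integrable (A.indicator fun _ => (2:ℝ)^((j:ℝ)/2)) volume := by
      rw [integrable_indicator_iff measurableSet_Ico]
      exact integrableOn_const (by rw [hvolA]; exact ENNReal.ofReal_ne_top)
    have hintB : Integrable (B.indicator fun _ => (2:ℝ)^((j:ℝ)/2)) volume := by
      rw [integrable_indicator_iff measurableSet_Ico]
      exact integrableOn_const (by rw [hvolB]; exact ENNReal.ofReal_ne_top)
    calc ∫ y in Set.Ici (0:ℝ), K x y * haarFn j n y
        = ∫ y : ℝ, (Set.Ici (0:ℝ)).indicator (fun y => K x y * haarFn j n y) y :=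
          (integral_indicator measurableSet_Ici).symm
      _ = ∫ y : ℝ, c * (A.indicator (fun _ => (2:ℝ)^((j:ℝ)/2)) y
            - B.indicator (fun _ => (2:ℝ)^((j:ℝ)/2)) y) :=
          integral_congr_ae (Filter.Eventually.of_forall hptw)
      _ = c * ((∫ y : ℝ, A.indicator (fun _ => (2:ℝ)^((j:ℝ)/2)) y)
            - ∫ y : ℝ, B.indicator (fun _ => (2:ℝ)^((j:ℝ)/2)) y) := by
          rw [integral_const_mul, integral_sub hintA hintB]
      _ = 0 := by
          rw [integral_indicator measurableSet_Ico, integral_indicator measurableSet_Ico,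
            setIntegral_const, setIntegral_const, measureReal_def, measureReal_def, hvolA, hvolB]
          ring
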